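/- arXiv:2206.08760 — 2 statements merged into one kernel-verified Lean document; each statement's English description precedes it below -/
import Mathlib

section
/- Let C = while e do (C₁;…;Cₙ) be a loop of the WHILE language, E its dependency relation, S₁,…,S_k a saturated covering of C, and fix a component S_j. Let B = C₁;…;Cₙ be the loop body of C, let B_j = C_{i₁};…;C_{i_m} (with i₁ < … < i_m enumerating S_j) be the loop body of the split loop C^j, and let V_j = Occ(e) ∪ ⋃_{i∈S_j} Occ(C_i). Then for every natural number p and every state σ: if the p-fold sequential iteration of B starting from σ terminates in a state σ_p, then the p-fold sequential iteration of B_j starting from σ terminates in some state τ_p, the states σ_p and τ_p agree on every variable in V_j, and in particular ⟦e⟧σ_p = ⟦e⟧τ_p. -/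
/-- Variables: a countably infinite set. -/
abbrev Var := ℕ

/-- Values: integers or integer arrays (total functions ℤ → ℤ). -/
inductive Val : Type where
  | int : ℤ → Val
  | arr : (ℤ → ℤ) → Val

/-- Coerce a value to an integer. -/
def Val.toInt : Val → ℤ
  | .int z => z
  | .arr _ => 0

/-- Coerce a value to an array. -/
def Val.toArr : Val → (ℤ → ℤ)
  | .int _ => fun _ => 0
  | .arr a => a

/-- States: total maps from variables to values. -/
abbrev State := Var → Val

/-- Expressions: variables, integer literals, array reads, and
applications of fixed interpreted `n`-ary operators. -/
inductive Expr : Type where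
  | var : Var → Expr
  | lit : ℤ → Expr
  | read : Var → Expr → Expr
  | op : (n : ℕ) → ((Fin n → ℤ) → ℤ) → (Fin n → Expr) → Expr

/-- Evaluation of expressions. -/
def Expr.eval (σ : State) : Expr → Val
  | .var x => σ x
  | .lit z => .int z
  | .read t e => .int ((σ t).toArr ((Expr.eval σ e).toInt))
  | .op n f args => .int (f fun i => (Expr.eval σ (args i)).toInt)

/-- An expression is truthy in a state if it evaluates to a nonzero integer. -/
def Expr.truthy (e : Expr) (σ : State) : Prop := (e.eval σ).toInt ≠ 0

/-- Variables occurring in an expression. -/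
def Expr.occ : Expr → Set Var
  | .var x => {x}
  | .lit _ => ∅
  | .read t e => {t} ∪ Expr.occ e
  | .op n _ args => ⋃ i : Fin n, Expr.occ (args i)

/-- Commands of the WHILE language. -/
inductive Com : Type where
  | assign : Var → Expr → Com
  | store : Var → Expr → Expr → Com          -- t[e₁] := e₂
  | ite : Expr → Com → Com → Com
  | whileDo : Expr → Com → Com
  | use : List Var → Com
  | skip : Com
  | seq : Com → Com → Com

/-- `Out C`: the set of variables modified by `C`. -/
def Com.out : Com → Set Var
  | .assign x _ => {x}
  | .store t _ _ => {t}
  | .ite _ c₁ c₂ => c₁.out ∪ c₂.out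
  | .whileDo _ c => c.out
  | .use _ => ∅
  | .skip => ∅
  | .seq c₁ c₂ => c₁.out ∪ c₂.out

/-- `In C`: the set of variables used by `C`. -/
def Com.inp : Com → Set Var
  | .assign _ e => e.occ
  | .store _ e₁ e₂ => e₁.occ ∪ e₂.occ
  | .ite e c₁ c₂ => e.occ ∪ c₁.inp ∪ c₂.inp
  | .whileDo e c => e.occ ∪ c.inp
  | .use xs => {x | x ∈ xs}
  | .skip => ∅
  | .seq c₁ c₂ => c₁.inp ∪ c₂.inp

/-- `Occ C`: the set of variables occurring in `C`. -/
def Com.occ : Com → Set Var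
  | .assign x e => {x} ∪ e.occ
  | .store t e₁ e₂ => {t} ∪ e₁.occ ∪ e₂.occ
  | .ite e c₁ c₂ => e.occ ∪ c₁.occ ∪ c₂.occ
  | .whileDo e c => e.occ ∪ c.occ
  | .use xs => {x | x ∈ xs}
  | .skip => ∅
  | .seq c₁ c₂ => c₁.occ ∪ c₂.occ

/-- Standard deterministic big-step operational semantics. -/
inductive BigStep : Com → State → State → Prop where
  | assign {x e σ} :
      BigStep (.assign x e) σ (Function.update σ x (e.eval σ))
  | store {t e₁ e₂ σ} :
      BigStep (.store t e₁ e₂) σ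
        (Function.update σ t
          (Val.arr (Function.update (σ t).toArr ((e₁.eval σ).toInt) ((e₂.eval σ).toInt))))
  | iteTrue {e c₁ c₂ σ σ'} : e.truthy σ → BigStep c₁ σ σ' →
      BigStep (.ite e c₁ c₂) σ σ'
  | iteFalse {e c₁ c₂ σ σ'} : ¬ e.truthy σ → BigStep c₂ σ σ' →
      BigStep (.ite e c₁ c₂) σ σ'
  | whileTrue {e c σ σ₁ σ₂} : e.truthy σ → BigStep c σ σ₁ →
      BigStep (.whileDo e c) σ₁ σ₂ → BigStep (.whileDo e c) σ σ₂
  | whileFalse {e c σ} : ¬ e.truthy σ → BigStep (.whileDo e c) σ σ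
  | use {xs σ} : BigStep (.use xs) σ σ
  | skip {σ} : BigStep .skip σ σ
  | seq {c₁ c₂ σ σ₁ σ₂} : BigStep c₁ σ σ₁ → BigStep c₂ σ₁ σ₂ →
      BigStep (.seq c₁ c₂) σ σ₂

/-- Sequential composition of a list of commands. -/
def seqList (l : List Com) : Com := l.foldr Com.seq Com.skip

/-- The body `C_{i₁};…;C_{i_m}` selected by a set `S` of indices,
with `i₁ < … < i_m` enumerating `S`. -/
def selBody {n : ℕ} (body : Fin n → Com) (S : Finset (Fin n)) : Com :=
  seqList ((S.sort (· ≤ ·)).map body)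

/-- The split loop `while e do (C_{i₁};…;C_{i_m})` for a set `S` of indices. -/
def splitLoop {n : ℕ} (e : Expr) (body : Fin n → Com) (S : Finset (Fin n)) : Com :=
  Com.whileDo e (selBody body S)

/-- The dependency relation of the loop `while e do (C₁;…;Cₙ)`:
`Dep e body i j` iff either `i ≠ j` and `Out(C_j) ∩ (In(C_i) ∪ Out(C_i)) ≠ ∅`
(flow and output dependence), or `Out(C_j) ∩ Occ(e) ≠ ∅` (loop-guard correction). -/
def Dep {n : ℕ} (e : Expr) (body : Fin n → Com) (i j : Fin n) : Prop :=
  (i ≠ j ∧ ((body j).out ∩ ((body i).inp ∪ (body i).out)).Nonempty) ∨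
  ((body j).out ∩ e.occ).Nonempty

/-- A saturated covering of the loop `while e do (C₁;…;Cₙ)`:
a finite family of nonempty subsets of `{1,…,n}` covering it,
each closed under the dependency relation. -/
def SaturatedCovering {n k : ℕ} (e : Expr) (body : Fin n → Com)
    (S : Fin k → Finset (Fin n)) : Prop :=
  (∀ j, (S j).Nonempty) ∧ (∀ i, ∃ j, i ∈ S j) ∧
  (∀ j i m, i ∈ S j → Dep e body i m → m ∈ S j)

/-- `p`-fold sequential iteration of a command. -/
def iterate (c : Com) (p : ℕ) : Com := seqList (List.replicate p c)

/-- Evaluation depends only on occurring variables. -/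
lemma eval_congr {σ τ : State} : ∀ (e : Expr), (∀ x ∈ e.occ, σ x = τ x) →
    e.eval σ = e.eval τ := by
  intro e
  induction e with
  | var x => intro h; exact h x (by simp [Expr.occ])
  | lit z => intro h; rfl
  | read t e ih =>
      intro h
      simp only [Expr.eval]
      rw [h t (by simp [Expr.occ]),
        ih (fun x hx => h x (by simp [Expr.occ]; exact Or.inr hx))]
  | op m f args ih =>
      intro h
      simp only [Expr.eval]
      have harg : (fun i => (Expr.eval σ (args i)).toInt)
          = fun i => (Expr.eval τ (args i)).toInt := by
        funext i
        rw [ih i (fun x hx => h x (by simp only [Expr.occ, Set.mem_iUnion]; exact ⟨i, hx⟩))]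
      rw [harg]

lemma occ_eq (c : Com) : c.occ = c.inp ∪ c.out := by
  induction c <;>
    simp only [Com.occ, Com.inp, Com.out, *] <;>
    · ext x; simp; try tauto

lemma bigStep_out {c : Com} {σ σ' : State} (h : BigStep c σ σ') :
    ∀ x, x ∉ c.out → σ' x = σ x := by
  induction h with
  | assign =>
      intro x hx
      rw [Function.update_of_ne (by simpa [Com.out] using hx)]
  | store =>
      intro x hx
      rw [Function.update_of_ne (by simpa [Com.out] using hx)]
  | iteTrue _ _ ih => intro x hx; exact ih x (fun hh => hx (Or.inl hh))
  | iteFalse _ _ ih => intro x hx; exact ih x (fun hh => hx (Or.inr hh))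
  | whileTrue _ _ _ ih₁ ih₂ =>
      intro x hx; rw [ih₂ x hx, ih₁ x hx]
  | whileFalse => intro x _; rfl
  | use => intro x _; rfl
  | skip => intro x _; rfl
  | seq _ _ ih₁ ih₂ =>
      intro x hx
      rw [ih₂ x (fun hh => hx (Or.inr hh)), ih₁ x (fun hh => hx (Or.inl hh))]

/-- Frame lemma: execution is determined by variables occurring in the command. -/
lemma frame {c : Com} {σ σ' : State} (h : BigStep c σ σ') :
    ∀ τ (W : Set Var), c.occ ⊆ W → (∀ x ∈ W, σ x = τ x) →
    ∃ τ', BigStep c τ τ' ∧ ∀ x ∈ W, σ' x = τ' x := by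
  induction h with
  | @assign x e σ =>
      intro τ W hsub hag
      have he : e.eval σ = e.eval τ :=
        eval_congr _ (fun y hy => hag y (hsub (by simp [Com.occ]; exact Or.inr hy)))
      refine ⟨_, BigStep.assign, fun y hy => ?_⟩
      by_cases hxy : y = x
      · subst hxy; simp [he]
      · simp [Function.update_of_ne hxy, hag y hy]
  | @store t e₁ e₂ σ =>
      intro τ W hsub hag
      have h1 : e₁.eval σ = e₁.eval τ :=
        eval_congr _ (fun y hy => hag y (hsub (by simp [Com.occ]; tauto)))
      have h2 : e₂.eval σ = e₂.eval τ :=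
        eval_congr _ (fun y hy => hag y (hsub (by simp [Com.occ]; tauto)))
      have ht : σ t = τ t := hag t (hsub (by simp [Com.occ]))
      refine ⟨_, BigStep.store, fun y hy => ?_⟩
      by_cases hxy : y = t
      · subst hxy; simp [h1, h2, ht]
      · simp [Function.update_of_ne hxy, hag y hy]
  | @iteTrue e c₁ c₂ σ σ' htr _ ih =>
      intro τ W hsub hag
      have he : e.eval σ = e.eval τ :=
        eval_congr _ (fun y hy => hag y (hsub (by simp [Com.occ]; tauto)))
      obtain ⟨τ', hb, hag'⟩ := ih τ W (fun y hy => hsub (by simp [Com.occ]; tauto)) hag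
      exact ⟨τ', BigStep.iteTrue (by rwa [Expr.truthy, ← he]) hb, hag'⟩
  | @iteFalse e c₁ c₂ σ σ' htr _ ih =>
      intro τ W hsub hag
      have he : e.eval σ = e.eval τ :=
        eval_congr _ (fun y hy => hag y (hsub (by simp [Com.occ]; tauto)))
      obtain ⟨τ', hb, hag'⟩ := ih τ W (fun y hy => hsub (by simp [Com.occ]; tauto)) hag
      exact ⟨τ', BigStep.iteFalse (by rwa [Expr.truthy, ← he]) hb, hag'⟩
  | @whileTrue e c σ σ₁ σ₂ htr _ _ ih₁ ih₂ =>
      intro τ W hsub hag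
      have he : e.eval σ = e.eval τ :=
        eval_congr _ (fun y hy => hag y (hsub (by simp [Com.occ]; tauto)))
      obtain ⟨τ₁, hb₁, hag₁⟩ := ih₁ τ W (fun y hy => hsub (by simp [Com.occ]; tauto)) hag
      obtain ⟨τ₂, hb₂, hag₂⟩ := ih₂ τ₁ W hsub hag₁
      exact ⟨τ₂, BigStep.whileTrue (by rwa [Expr.truthy, ← he]) hb₁ hb₂, hag₂⟩
  | @whileFalse e c σ htr =>
      intro τ W hsub hag
      have he : e.eval σ = e.eval τ :=
        eval_congr _ (fun y hy => hag y (hsub (by simp [Com.occ]; tauto)))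
      exact ⟨τ, BigStep.whileFalse (by rwa [Expr.truthy, ← he]), hag⟩
  | use => intro τ W _ hag; exact ⟨τ, BigStep.use, hag⟩
  | skip => intro τ W _ hag; exact ⟨τ, BigStep.skip, hag⟩
  | @seq c₁ c₂ σ σ₁ σ₂ _ _ ih₁ ih₂ =>
      intro τ W hsub hag
      obtain ⟨τ₁, hb₁, hag₁⟩ := ih₁ τ W (fun y hy => hsub (Or.inl hy)) hag
      obtain ⟨τ₂, hb₂, hag₂⟩ := ih₂ τ₁ W (fun y hy => hsub (Or.inr hy)) hag₁
      exact ⟨τ₂, BigStep.seq hb₁ hb₂, hag₂⟩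

/-- Simulation for a list of indexed commands, filtering to those in `Sj`. -/
lemma list_sim {n : ℕ} (body : Fin n → Com) (Sj : Finset (Fin n)) (V : Set Var)
    (hin : ∀ i ∈ Sj, (body i).occ ⊆ V)
    (hout : ∀ i ∉ Sj, ∀ x ∈ (body i).out, x ∉ V) :
    ∀ (l : List (Fin n)) σ σ' τ,
      BigStep (seqList (l.map body)) σ σ' → (∀ x ∈ V, σ x = τ x) →
      ∃ τ', BigStep (seqList ((l.filter (· ∈ Sj)).map body)) τ τ' ∧
        ∀ x ∈ V, σ' x = τ' x := by
  intro l
  induction l with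
  | nil =>
      intro σ σ' τ h hag
      cases h
      exact ⟨τ, BigStep.skip, hag⟩
  | cons i l ih =>
      intro σ σ' τ h hag
      cases h with
      | seq h₁ h₂ =>
        rename_i σ₁
        by_cases hi : i ∈ Sj
        · obtain ⟨τ₁, hb₁, hag₁⟩ := frame h₁ τ V (hin i hi) hag
          obtain ⟨τ', hb', hag'⟩ := ih σ₁ σ' τ₁ h₂ hag₁
          refine ⟨τ', ?_, hag'⟩
          simpa [List.filter_cons, hi, seqList] using BigStep.seq hb₁ hb'
        · have hag₁ : ∀ x ∈ V, σ₁ x = τ x := fun x hx => by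
            rw [bigStep_out h₁ x (fun hc => hout i hi x hc hx), hag x hx]
          obtain ⟨τ', hb', hag'⟩ := ih σ₁ σ' τ h₂ hag₁
          refine ⟨τ', ?_, hag'⟩
          simpa [List.filter_cons, hi] using hb'

lemma sort_filter {n : ℕ} (Sj : Finset (Fin n)) :
    (Finset.univ.sort (α := Fin n) (· ≤ ·)).filter (· ∈ Sj) = Sj.sort (· ≤ ·) := by
  have h1 : ((Finset.univ.sort (α := Fin n) (· ≤ ·)).filter (· ∈ Sj)).Nodup :=
    (Finset.sort_nodup _ _).filter _
  have h2 := Finset.sort_nodup Sj (· ≤ ·)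
  exact List.Perm.eq_of_pairwise'
    ((Finset.pairwise_sort _ _).filter _) (Finset.pairwise_sort _ _)
    (List.perm_of_nodup_nodup_toFinset_eq h1 h2 (by ext x; simp))

/-- For a component `S_j` of a saturated covering, every `p`-fold
iteration of the full loop body `B` from `σ` that terminates in `σ_p` is matched
by a terminating `p`-fold iteration of the split body `B_j` from `σ` ending in a
state `τ_p` agreeing with `σ_p` on `V_j = Occ(e) ∪ ⋃_{i∈S_j} Occ(C_i)`; in
particular `⟦e⟧σ_p = ⟦e⟧τ_p`. -/
theorem iterated_bodies_agree {n k : ℕ} (e : Expr) (body : Fin n → Com)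
    (S : Fin k → Finset (Fin n)) (hS : SaturatedCovering e body S) (j : Fin k)
    (p : ℕ) (σ σp : State)
    (h : BigStep (iterate (selBody body Finset.univ) p) σ σp) :
    ∃ τp : State,
      BigStep (iterate (selBody body (S j)) p) σ τp ∧
      (∀ x ∈ e.occ ∪ ⋃ i ∈ S j, (body i).occ, σp x = τp x) ∧
      e.eval σp = e.eval τp := by
  
  set Sj := S j with hSj
  set V : Set Var := e.occ ∪ ⋃ i ∈ Sj, (body i).occ with hV
  have hin : ∀ i ∈ Sj, (body i).occ ⊆ V := by
    intro i hi x hx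
    exact Or.inr (Set.mem_biUnion hi hx)
  have hout : ∀ i ∉ Sj, ∀ x ∈ (body i).out, x ∉ V := by
    intro m hm x hx hxV
    obtain ⟨i0, hi0⟩ := hS.1 j
    rcases hxV with hxe | hxo
    · exact hm (hS.2.2 j i0 m hi0 (Or.inr ⟨x, hx, hxe⟩))
    · simp only [Set.mem_iUnion] at hxo
      obtain ⟨i, hi, hxi⟩ := hxo
      rw [occ_eq] at hxi
      have hne : i ≠ m := fun hh => hm (hh ▸ hi)
      exact hm (hS.2.2 j i m hi (Or.inl ⟨hne, x, hx, hxi⟩))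
  have step : ∀ σ σ' τ, BigStep (selBody body Finset.univ) σ σ' →
      (∀ x ∈ V, σ x = τ x) →
      ∃ τ', BigStep (selBody body Sj) τ τ' ∧ ∀ x ∈ V, σ' x = τ' x := by
    intro σ σ' τ h hag
    obtain ⟨τ', hb, hag'⟩ := list_sim body Sj V hin hout _ σ σ' τ h hag
    rw [sort_filter] at hb
    exact ⟨τ', hb, hag'⟩
  have main : ∀ q σ σq τ, BigStep (iterate (selBody body Finset.univ) q) σ σq →
      (∀ x ∈ V, σ x = τ x) →
      ∃ τq, BigStep (iterate (selBody body Sj) q) τ τq ∧ ∀ x ∈ V, σq x = τq x := by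
    intro q
    induction q with
    | zero =>
        intro σ σq τ h hag
        cases h
        exact ⟨τ, BigStep.skip, hag⟩
    | succ q ih =>
        intro σ σq τ h hag
        rw [iterate, List.replicate_succ] at h
        cases h with
        | seq h₁ h₂ =>
          obtain ⟨τ₁, hb₁, hag₁⟩ := step _ _ _ h₁ hag
          obtain ⟨τq, hbq, hagq⟩ := ih _ _ _ h₂ hag₁
          refine ⟨τq, ?_, hagq⟩
          rw [iterate, List.replicate_succ]
          exact BigStep.seq hb₁ hbq
  obtain ⟨τp, hb, hag⟩ := main p σ σp σ h (fun _ _ => rfl)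
  exact ⟨τp, hb, hag, eval_congr _ (fun x hx => hag x (Or.inl hx))⟩
end

section
/- (Semantic correctness of loop fission.) Let C = while e do (C₁;…;Cₙ) be a loop of the WHILE language, E its dependency relation, and S₁,…,S_k a saturated covering of C, with split loops C^1,…,C^k. Suppose the execution of C from a state σ terminates in a state σ'. For each j let σ_j be the final state of the (terminating) execution of C^j from σ. Define a state τ : Var → Val by: τ(x) = σ_j(x) whenever x ∈ Out(C_i) for some i ∈ S_j (this value is independent of the choice of such j), and τ(x) = σ(x) whenever x ∉ Out(C_i) for all i ∈ {1,…,n}. Then τ = σ'. That is, the transformed program C̃, which runs the split loops C^1,…,C^k on private copies of the state and takes the value of each variable from a loop that modifies it, has exactly the same semantics as the original loop C. -/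
section Aux

/-- Two states agree on a set of variables. -/
def Agrees (V : Set Var) (σ ρ : State) : Prop := ∀ x ∈ V, σ x = ρ x

lemma eval_congr_s7 {V : Set Var} {σ ρ : State} (h : Agrees V σ ρ) :
    ∀ e : Expr, e.occ ⊆ V → e.eval σ = e.eval ρ
  | .var x, hs => h x (hs (by simp [Expr.occ]))
  | .lit _, _ => rfl
  | .read t e, hs => by
      have ht : σ t = ρ t := h t (hs (by simp [Expr.occ]))
      have he := eval_congr_s7 h e (fun x hx => hs (by simp [Expr.occ, hx]))
      simp [Expr.eval, ht, he]
  | .op m f args, hs => by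
      simp only [Expr.eval, Val.int.injEq]
      congr 1
      funext i
      rw [eval_congr_s7 h (args i)
        (fun x hx => hs (by simp only [Expr.occ, Set.mem_iUnion]; exact ⟨i, hx⟩))]

lemma truthy_congr {V : Set Var} {σ ρ : State} (hag : Agrees V σ ρ) {e : Expr}
    (he : e.occ ⊆ V) : e.truthy σ ↔ e.truthy ρ := by
  unfold Expr.truthy
  rw [eval_congr_s7 hag e he]

lemma bigstep_frame : ∀ {c σ σ'}, BigStep c σ σ' → ∀ x, x ∉ c.out → σ' x = σ x := by
  intro c σ σ' h
  induction h with
  | @assign y e σ =>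
      intro x hx
      simp only [Com.out, Set.mem_singleton_iff] at hx
      simp [Function.update, hx]
  | @store t e₁ e₂ σ =>
      intro x hx
      simp only [Com.out, Set.mem_singleton_iff] at hx
      simp [Function.update, hx]
  | iteTrue ht hb ih =>
      intro x hx
      exact ih x (fun hxo => hx (Or.inl hxo))
  | iteFalse ht hb ih =>
      intro x hx
      exact ih x (fun hxo => hx (Or.inr hxo))
  | whileTrue ht hb hw ihb ihw =>
      intro x hx
      rw [ihw x hx, ihb x hx]
  | whileFalse _ => intro x _; rfl
  | use => intro x _; rfl
  | skip => intro x _; rfl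
  | seq h₁ h₂ ih₁ ih₂ =>
      intro x hx
      rw [ih₂ x (fun hxo => hx (Or.inr hxo)), ih₁ x (fun hxo => hx (Or.inl hxo))]

lemma bigstep_det : ∀ {c σ σ₁}, BigStep c σ σ₁ → ∀ {σ₂}, BigStep c σ σ₂ → σ₁ = σ₂ := by
  intro c σ σ₁ h₁
  induction h₁ with
  | assign => intro σ₂ h; cases h; rfl
  | store => intro σ₂ h; cases h; rfl
  | iteTrue ht _ ih =>
      intro σ₂ h
      cases h with
      | iteTrue _ hb => exact ih hb
      | iteFalse hf _ => exact absurd ht hf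
  | iteFalse hf _ ih =>
      intro σ₂ h
      cases h with
      | iteTrue ht _ => exact absurd ht hf
      | iteFalse _ hb => exact ih hb
  | whileTrue ht hb hw ihb ihw =>
      intro σ₂ h
      cases h with
      | whileTrue _ hb₂ hw₂ => cases ihb hb₂; exact ihw hw₂
      | whileFalse hf => exact absurd ht hf
  | whileFalse hf =>
      intro σ₂ h
      cases h with
      | whileTrue ht _ _ => exact absurd ht hf
      | whileFalse _ => rfl
  | use => intro σ₂ h; cases h; rfl
  | skip => intro σ₂ h; cases h; rfl
  | seq g₁ g₂ ih₁ ih₂ =>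
      intro σ₂ h
      cases h with
      | seq g₁' g₂' => cases ih₁ g₁'; exact ih₂ g₂'

lemma sim_com {V : Set Var} :
    ∀ {c σ σ'}, BigStep c σ σ' → c.inp ∪ c.out ⊆ V → ∀ {ρ}, Agrees V σ ρ →
      ∃ ρ', BigStep c ρ ρ' ∧ Agrees V σ' ρ' := by
  intro c σ σ' h
  induction h with
  | @assign x e σ =>
      intro hsub ρ hag
      simp only [Com.inp, Com.out, Set.union_subset_iff] at hsub
      obtain ⟨h1, h2⟩ := hsub
      have he := eval_congr_s7 hag e h1
      refine ⟨_, .assign, ?_⟩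
      intro y hy
      by_cases hyx : y = x
      · subst hyx; simp [Function.update, he]
      · simp [Function.update, hyx]; exact hag y hy
  | @store t e₁ e₂ σ =>
      intro hsub ρ hag
      simp only [Com.inp, Com.out, Set.union_subset_iff] at hsub
      obtain ⟨⟨h1, h2⟩, h3⟩ := hsub
      have ht : σ t = ρ t := hag t (h3 (Set.mem_singleton t))
      have he1 := eval_congr_s7 hag e₁ h1
      have he2 := eval_congr_s7 hag e₂ h2
      refine ⟨_, .store, ?_⟩
      intro y hy
      by_cases hyt : y = t
      · subst hyt; simp [Function.update, ht, he1, he2]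
      · simp [Function.update, hyt]; exact hag y hy
  | @iteTrue e c₁ c₂ σ σ' ht hb ih =>
      intro hsub ρ hag
      simp only [Com.inp, Com.out, Set.union_subset_iff] at hsub
      obtain ⟨⟨⟨he, h1⟩, h2⟩, ho1, ho2⟩ := hsub
      obtain ⟨ρ', hρ, hag'⟩ := ih (Set.union_subset h1 ho1) hag
      exact ⟨ρ', .iteTrue ((truthy_congr hag he).1 ht) hρ, hag'⟩
  | @iteFalse e c₁ c₂ σ σ' hf hb ih =>
      intro hsub ρ hag
      simp only [Com.inp, Com.out, Set.union_subset_iff] at hsub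
      obtain ⟨⟨⟨he, h1⟩, h2⟩, ho1, ho2⟩ := hsub
      obtain ⟨ρ', hρ, hag'⟩ := ih (Set.union_subset h2 ho2) hag
      exact ⟨ρ', .iteFalse (fun htr => hf ((truthy_congr hag he).2 htr)) hρ, hag'⟩
  | @whileTrue e c σ σ₁ σ₂ ht hb hw ihb ihw =>
      intro hsub ρ hag
      have hsub' := hsub
      simp only [Com.inp, Com.out, Set.union_subset_iff] at hsub'
      obtain ⟨⟨he, hi⟩, ho⟩ := hsub'
      obtain ⟨ρ₁, hρ₁, hag₁⟩ := ihb (Set.union_subset hi ho) hag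
      obtain ⟨ρ₂, hρ₂, hag₂⟩ := ihw hsub hag₁
      exact ⟨ρ₂, .whileTrue ((truthy_congr hag he).1 ht) hρ₁ hρ₂, hag₂⟩
  | @whileFalse e c σ hf =>
      intro hsub ρ hag
      have he : e.occ ⊆ V := fun x hx => hsub (Or.inl (Or.inl hx))
      exact ⟨ρ, .whileFalse (fun htr => hf ((truthy_congr hag he).2 htr)), hag⟩
  | use => intro _ ρ hag; exact ⟨ρ, .use, hag⟩
  | skip => intro _ ρ hag; exact ⟨ρ, .skip, hag⟩
  | seq g₁ g₂ ih₁ ih₂ =>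
      intro hsub ρ hag
      simp only [Com.inp, Com.out, Set.union_subset_iff] at hsub
      obtain ⟨⟨hi1, hi2⟩, ho1, ho2⟩ := hsub
      obtain ⟨ρ₁, hρ₁, hag₁⟩ := ih₁ (Set.union_subset hi1 ho1) hag
      obtain ⟨ρ₂, hρ₂, hag₂⟩ := ih₂ (Set.union_subset hi2 ho2) hag₁
      exact ⟨ρ₂, .seq hρ₁ hρ₂, hag₂⟩

lemma sim_list {n : ℕ} (body : Fin n → Com) (S : Finset (Fin n)) (V : Set Var)
    (hin : ∀ i ∈ S, (body i).inp ∪ (body i).out ⊆ V)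
    (hout : ∀ i ∉ S, ∀ x ∈ (body i).out, x ∉ V) :
    ∀ (L : List (Fin n)) {σ σ'}, BigStep (seqList (L.map body)) σ σ' →
      ∀ {ρ}, Agrees V σ ρ →
      ∃ ρ', BigStep (seqList ((L.filter (fun i => i ∈ S)).map body)) ρ ρ' ∧
        Agrees V σ' ρ' := by
  intro L
  induction L with
  | nil =>
      intro σ σ' h ρ hag
      cases h
      exact ⟨ρ, .skip, hag⟩
  | cons i L ih =>
      intro σ σ' h ρ hag
      rw [show seqList ((i :: L).map body) = Com.seq (body i) (seqList (L.map body))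
        from rfl] at h
      cases h with
      | @seq _ _ _ σ₁ _ h₁ h₂ =>
        by_cases hiS : i ∈ S
        · obtain ⟨ρ₁, hρ₁, hag₁⟩ := sim_com h₁ (hin i hiS) hag
          obtain ⟨ρ', hρ', hag'⟩ := ih h₂ hag₁
          refine ⟨ρ', ?_, hag'⟩
          have hfil : (i :: L).filter (fun j => (j ∈ S : Bool)) =
              i :: L.filter (fun j => (j ∈ S : Bool)) := by
            simp [List.filter_cons, hiS]
          rw [hfil]
          exact .seq hρ₁ hρ'
        · have hag₁ : Agrees V σ₁ ρ := fun x hx => by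
            rw [bigstep_frame h₁ x (fun hxo => hout i hiS x hxo hx)]
            exact hag x hx
          obtain ⟨ρ', hρ', hag'⟩ := ih h₂ hag₁
          refine ⟨ρ', ?_, hag'⟩
          have hfil : (i :: L).filter (fun j => (j ∈ S : Bool)) =
              L.filter (fun j => (j ∈ S : Bool)) := by
            simp [List.filter_cons, hiS]
          rw [hfil]
          exact hρ'

lemma sim_loop (e : Expr) (cb cb' : Com) (V : Set Var) (he : e.occ ⊆ V)
    (hbody : ∀ {σa σa'}, BigStep cb σa σa' → ∀ {ρ}, Agrees V σa ρ →
      ∃ ρ', BigStep cb' ρ ρ' ∧ Agrees V σa' ρ') :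
    ∀ {σ σ'}, BigStep (.whileDo e cb) σ σ' → ∀ {ρ}, Agrees V σ ρ →
      ∃ ρ', BigStep (.whileDo e cb') ρ ρ' ∧ Agrees V σ' ρ' := by
  have aux : ∀ (c : Com) (σ σ' : State), BigStep c σ σ' → c = .whileDo e cb →
      ∀ ρ, Agrees V σ ρ →
      ∃ ρ', BigStep (.whileDo e cb') ρ ρ' ∧ Agrees V σ' ρ' := by
    intro c σ σ' h
    induction h with
    | assign => intro hc; exact absurd hc (by simp)
    | store => intro hc; exact absurd hc (by simp)
    | iteTrue _ _ _ => intro hc; exact absurd hc (by simp)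
    | iteFalse _ _ _ => intro hc; exact absurd hc (by simp)
    | use => intro hc; exact absurd hc (by simp)
    | skip => intro hc; exact absurd hc (by simp)
    | seq _ _ _ _ => intro hc; exact absurd hc (by simp)
    | whileTrue ht hb hw ihb ihw =>
        intro hc ρ hag
        injection hc with he' hcb
        subst he'; subst hcb
        obtain ⟨ρ₁, hρ₁, hag₁⟩ := hbody hb hag
        obtain ⟨ρ', hρ', hag'⟩ := ihw rfl ρ₁ hag₁
        exact ⟨ρ', .whileTrue ((truthy_congr hag he).1 ht) hρ₁ hρ', hag'⟩
    | whileFalse hf =>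
        intro hc ρ hag
        injection hc with he' hcb
        subst he'; subst hcb
        exact ⟨ρ, .whileFalse (fun htr => hf ((truthy_congr hag he).2 htr)), hag⟩
  intro σ σ' h ρ hag
  exact aux _ _ _ h rfl ρ hag

lemma sort_filter_univ {n : ℕ} (S : Finset (Fin n)) :
    S.sort (· ≤ ·) =
      (Finset.univ.sort (· ≤ ·)).filter (fun i => (i ∈ S : Bool)) := by
  have s1 : List.Pairwise (· ≤ ·) (S.sort (· ≤ ·)) := Finset.pairwise_sort _ _
  have s2 : List.Pairwise (· ≤ ·)
      ((Finset.univ.sort (· ≤ ·)).filter (fun i => (i ∈ S : Bool))) :=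
    (Finset.pairwise_sort _ _).filter _
  have p : List.Perm (S.sort (· ≤ ·))
      ((Finset.univ.sort (· ≤ ·)).filter (fun i => (i ∈ S : Bool))) := by
    refine (List.perm_ext_iff_of_nodup (Finset.sort_nodup _ _)
      ((Finset.sort_nodup _ _).filter _)).2 ?_
    intro a
    simp [Finset.mem_sort, List.mem_filter]
  exact List.Perm.eq_of_pairwise' s1 s2 p

lemma not_out_seqList {n : ℕ} (body : Fin n → Com) {x : Var}
    (hx : ∀ i, x ∉ (body i).out) :
    ∀ L : List (Fin n), x ∉ (seqList (L.map body)).out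
  | [] => by simp [seqList, Com.out]
  | i :: L => by
      rw [show seqList ((i :: L).map body) = Com.seq (body i) (seqList (L.map body))
        from rfl]
      simp only [Com.out, Set.mem_union, not_or]
      exact ⟨hx i, not_out_seqList body hx L⟩

end Aux

/-- Semantic correctness of loop fission: if the loop terminates
from `σ` in `σ'`, and each split loop `C^j` terminates from `σ` in `σ_j`, then
the state `τ` taking the value of each variable modified by some `C^j` from
`σ_j`, and the initial value `σ x` for variables modified by no command of the
body, equals `σ'`. -/
theorem loop_fission_semantic_correctness {n k : ℕ} (e : Expr)
    (body : Fin n → Com) (S : Fin k → Finset (Fin n))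
    (hS : SaturatedCovering e body S) (σ σ' : State)
    (h : BigStep (splitLoop e body Finset.univ) σ σ')
    (σs : Fin k → State)
    (hsplit : ∀ j, BigStep (splitLoop e body (S j)) σ (σs j))
    (τ : State)
    (hτmod : ∀ (x : Var) (j : Fin k) (i : Fin n),
      i ∈ S j → x ∈ (body i).out → τ x = σs j x)
    (hτunmod : ∀ x : Var, (∀ i : Fin n, x ∉ (body i).out) → τ x = σ x) :
    τ = σ' := by
  classical
  obtain ⟨hne, hcov, hclosed⟩ := hS
  have key : ∀ j : Fin k,
      Agrees (e.occ ∪ ⋃ i ∈ S j, ((body i).inp ∪ (body i).out)) σ' (σs j) := by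
    intro j
    set V : Set Var := e.occ ∪ ⋃ i ∈ S j, ((body i).inp ∪ (body i).out) with hV
    have hocc : e.occ ⊆ V := Set.subset_union_left
    have hin : ∀ i ∈ S j, (body i).inp ∪ (body i).out ⊆ V := by
      intro i hi x hxm
      exact Or.inr (Set.mem_biUnion hi hxm)
    have hout : ∀ m ∉ S j, ∀ x ∈ (body m).out, x ∉ V := by
      intro m hm x hx hxV
      rcases hxV with hxe | hxi
      · obtain ⟨i₀, hi₀⟩ := hne j
        exact hm (hclosed j i₀ m hi₀ (Or.inr ⟨x, hx, hxe⟩))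
      · simp only [Set.mem_iUnion] at hxi
        obtain ⟨i, hi, hxio⟩ := hxi
        have hne' : i ≠ m := fun hh => hm (hh ▸ hi)
        exact hm (hclosed j i m hi (Or.inl ⟨hne', x, hx, hxio⟩))
    have hbody : ∀ {σa σa'}, BigStep (selBody body Finset.univ) σa σa' →
        ∀ {ρ}, Agrees V σa ρ →
        ∃ ρ', BigStep (selBody body (S j)) ρ ρ' ∧ Agrees V σa' ρ' := by
      intro σa σa' hb ρ hag
      obtain ⟨ρ', hρ, hag'⟩ :=
        sim_list body (S j) V hin hout (Finset.univ.sort (· ≤ ·)) hb hag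
      refine ⟨ρ', ?_, hag'⟩
      rw [selBody, sort_filter_univ]
      exact hρ
    obtain ⟨ρ', hρ', hag'⟩ :=
      sim_loop e (selBody body Finset.univ) (selBody body (S j)) V hocc hbody h
        (fun x _ => rfl)
    have : ρ' = σs j := bigstep_det hρ' (hsplit j)
    subst this
    exact hag'
  funext x
  by_cases hx : ∃ i, x ∈ (body i).out
  · obtain ⟨i, hxi⟩ := hx
    obtain ⟨j, hij⟩ := hcov i
    rw [hτmod x j i hij hxi]
    refine (key j x (Or.inr ?_)).symm
    simp only [Set.mem_iUnion]
    exact ⟨i, hij, Or.inr hxi⟩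
  · push_neg at hx
    rw [hτunmod x hx]
    exact (bigstep_frame h x (not_out_seqList body hx _)).symm
end
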